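/- The matrix 𝒬 is invertible and 𝒬^{−T}𝒟 = ℳ; equivalently, 𝒬ᵀℳ = 𝒟, where ℳ = M₀ ⊗ I_m with M₀ = I_{p+1} − (1/(p+1))·[e_p e_pᵀ, −(1/β)e_p; β e_pᵀ, p]. In particular, 𝒬^{−T}𝒟 is the sum of the identity and a block rank-two matrix. -/

import Mathlib

open Matrix
open scoped Kronecker

noncomputable section

/-- `Q₀ = [β I_p, e_p; −e_pᵀ, 1/β]`. -/
def Q0 (p : ℕ) (β : ℝ) : Matrix (Fin p ⊕ Unit) (Fin p ⊕ Unit) ℝ :=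
  Matrix.fromBlocks (β • (1 : Matrix (Fin p) (Fin p) ℝ))
    (Matrix.of fun _ _ => (1 : ℝ))
    (Matrix.of fun _ _ => (-1 : ℝ))
    (Matrix.of fun _ _ => 1 / β)

/-- `D₀ = diag(β, …, β, 1/β)`. -/
def D0 (p : ℕ) (β : ℝ) : Matrix (Fin p ⊕ Unit) (Fin p ⊕ Unit) ℝ :=
  Matrix.fromBlocks (β • (1 : Matrix (Fin p) (Fin p) ℝ)) 0 0
    (Matrix.of fun _ _ => 1 / β)

/-- `M₀ = I_{p+1} − (1/(p+1))·[e_p e_pᵀ, −(1/β)e_p; β e_pᵀ, p]`. -/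
def M0 (p : ℕ) (β : ℝ) : Matrix (Fin p ⊕ Unit) (Fin p ⊕ Unit) ℝ :=
  1 - (1 / (p + 1 : ℝ)) •
    Matrix.fromBlocks (Matrix.of fun _ _ => (1 : ℝ))
      (Matrix.of fun _ _ => -(1 / β))
      (Matrix.of fun _ _ => (β : ℝ))
      (Matrix.of fun _ _ => (p : ℝ))

/-- `H₀ = [β(I_p + e_p e_pᵀ), 0; 0, (p+1)/β]`. -/
def H0 (p : ℕ) (β : ℝ) : Matrix (Fin p ⊕ Unit) (Fin p ⊕ Unit) ℝ :=
  Matrix.fromBlocks (β • ((1 : Matrix (Fin p) (Fin p) ℝ) + Matrix.of fun _ _ => (1 : ℝ))) 0 0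
    (Matrix.of fun _ _ => (p + 1 : ℝ) / β)

/-- `𝒬 = Q₀ ⊗ I_m`. -/
def calQ (p m : ℕ) (β : ℝ) : Matrix ((Fin p ⊕ Unit) × Fin m) ((Fin p ⊕ Unit) × Fin m) ℝ :=
  Q0 p β ⊗ₖ (1 : Matrix (Fin m) (Fin m) ℝ)

/-- `𝒟 = D₀ ⊗ I_m`. -/
def calD (p m : ℕ) (β : ℝ) : Matrix ((Fin p ⊕ Unit) × Fin m) ((Fin p ⊕ Unit) × Fin m) ℝ :=
  D0 p β ⊗ₖ (1 : Matrix (Fin m) (Fin m) ℝ)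

/-- `ℳ = M₀ ⊗ I_m`. -/
def calM (p m : ℕ) (β : ℝ) : Matrix ((Fin p ⊕ Unit) × Fin m) ((Fin p ⊕ Unit) × Fin m) ℝ :=
  M0 p β ⊗ₖ (1 : Matrix (Fin m) (Fin m) ℝ)

/-- `ℋ = H₀ ⊗ I_m`. -/
def calH (p m : ℕ) (β : ℝ) : Matrix ((Fin p ⊕ Unit) × Fin m) ((Fin p ⊕ Unit) × Fin m) ℝ :=
  H0 p β ⊗ₖ (1 : Matrix (Fin m) (Fin m) ℝ)

/-- `‖v‖²_G = vᵀ G v`. -/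
def nsq {p m : ℕ} (G : Matrix ((Fin p ⊕ Unit) × Fin m) ((Fin p ⊕ Unit) × Fin m) ℝ)
    (v : (Fin p ⊕ Unit) × Fin m → ℝ) : ℝ :=
  v ⬝ᵥ G.mulVec v

/-- `θ(x) = Σ_i θ_i(x_i)`. -/
def thetaSum {p : ℕ} {n : Fin p → ℕ} (θ : (i : Fin p) → (Fin (n i) → ℝ) → ℝ)
    (x : (i : Fin p) → Fin (n i) → ℝ) : ℝ :=
  ∑ i, θ i (x i)

/-- The Euclidean inner product on `ℝ^{n_1}×⋯×ℝ^{n_p}×ℝ^m`. -/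
def dotW {p m : ℕ} {n : Fin p → ℕ}
    (w w' : ((i : Fin p) → Fin (n i) → ℝ) × (Fin m → ℝ)) : ℝ :=
  (∑ i, w.1 i ⬝ᵥ w'.1 i) + w.2 ⬝ᵥ w'.2

/-- `F(w) = (−A_1ᵀλ, …, −A_pᵀλ, Σ_i A_i x_i − b)`. -/
def Fop {p m : ℕ} {n : Fin p → ℕ} (A : (i : Fin p) → Matrix (Fin m) (Fin (n i)) ℝ)
    (b : Fin m → ℝ) (w : ((i : Fin p) → Fin (n i) → ℝ) × (Fin m → ℝ)) :
    ((i : Fin p) → Fin (n i) → ℝ) × (Fin m → ℝ) :=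
  (fun i => -((A i)ᵀ.mulVec w.2), (∑ i, (A i).mulVec (w.1 i)) - b)

/-- `Pw = (A_1 x_1, …, A_p x_p, λ) ∈ ℝ^{(p+1)m}`. -/
def Pmap {p m : ℕ} {n : Fin p → ℕ} (A : (i : Fin p) → Matrix (Fin m) (Fin (n i)) ℝ)
    (w : ((i : Fin p) → Fin (n i) → ℝ) × (Fin m → ℝ)) :
    (Fin p ⊕ Unit) × Fin m → ℝ :=
  fun q => Sum.elim (fun i => (A i).mulVec (w.1 i) q.2) (fun _ => w.2 q.2) q.1

/-- `Ω = 𝒳_1 × ⋯ × 𝒳_p × ℝ^m`. -/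
def OmegaSet {p : ℕ} (m : ℕ) {n : Fin p → ℕ} (X : (i : Fin p) → Set (Fin (n i) → ℝ)) :
    Set (((i : Fin p) → Fin (n i) → ℝ) × (Fin m → ℝ)) :=
  {w | ∀ i, w.1 i ∈ X i}

/-- The solution set `Ω*` of the variational inequality VI(Ω,F,θ). -/
def VIsol {p m : ℕ} {n : Fin p → ℕ} (θ : (i : Fin p) → (Fin (n i) → ℝ) → ℝ)
    (X : (i : Fin p) → Set (Fin (n i) → ℝ))
    (A : (i : Fin p) → Matrix (Fin m) (Fin (n i)) ℝ) (b : Fin m → ℝ) :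
    Set (((i : Fin p) → Fin (n i) → ℝ) × (Fin m → ℝ)) :=
  {ws | ws ∈ OmegaSet m X ∧ ∀ w ∈ OmegaSet m X,
    thetaSum θ w.1 - thetaSum θ ws.1 + dotW (w - ws) (Fop A b ws) ≥ 0}

/-- The `λ`-component of `ξ = (u_1, …, u_p, λ)`. -/
def lamOf {p m : ℕ} (ξ : (Fin p ⊕ Unit) × Fin m → ℝ) : Fin m → ℝ :=
  fun j => ξ (Sum.inr (), j)

/-- The `u_i`-component of `ξ = (u_1, …, u_p, λ)`. -/
def uOf {p m : ℕ} (ξ : (Fin p ⊕ Unit) × Fin m → ℝ) (i : Fin p) : Fin m → ℝ :=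
  fun j => ξ (Sum.inl i, j)

/-- The parallel splitting ALM step: with input `ξ = (u_1, …, u_p, λ)` it produces
`w̃ = (x̃_1, …, x̃_p, λ̃)` where each `x̃_i ∈ 𝒳_i` minimizes
`x_i ↦ θ_i(x_i) − λᵀ A_i x_i + (β/2)‖A_i x_i − u_i‖²` over `𝒳_i`, and
`λ̃ = λ − β(Σ_i u_i − b)`. -/
def ALMStep {p m : ℕ} {n : Fin p → ℕ} (β : ℝ) (θ : (i : Fin p) → (Fin (n i) → ℝ) → ℝ)
    (X : (i : Fin p) → Set (Fin (n i) → ℝ))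
    (A : (i : Fin p) → Matrix (Fin m) (Fin (n i)) ℝ) (b : Fin m → ℝ)
    (ξ : (Fin p ⊕ Unit) × Fin m → ℝ)
    (wt : ((i : Fin p) → Fin (n i) → ℝ) × (Fin m → ℝ)) : Prop :=
  (∀ i, wt.1 i ∈ X i ∧ ∀ y ∈ X i,
      θ i (wt.1 i) - lamOf ξ ⬝ᵥ (A i).mulVec (wt.1 i) +
          β / 2 * (((A i).mulVec (wt.1 i) - uOf ξ i) ⬝ᵥ ((A i).mulVec (wt.1 i) - uOf ξ i)) ≤
        θ i y - lamOf ξ ⬝ᵥ (A i).mulVec y +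
          β / 2 * (((A i).mulVec y - uOf ξ i) ⬝ᵥ ((A i).mulVec y - uOf ξ i))) ∧
  wt.2 = lamOf ξ - β • ((∑ i, uOf ξ i) - b)

set_option linter.unreachableTactic false
set_option linter.unusedTactic false

lemma QtM (p : ℕ) {β : ℝ} (hβ : 0 < β) : (Q0 p β)ᵀ * M0 p β = D0 p β := by
  have hβ' : β ≠ 0 := hβ.ne'
  have hp1 : (p + 1 : ℝ) ≠ 0 := by positivity
  ext x y
  cases x with
  | inl i => cases y with
    | inl j =>
      simp [Q0, M0, D0, Matrix.mul_apply, Fintype.sum_sum_type, Matrix.one_apply,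
        Matrix.sub_apply, Matrix.smul_apply, transpose_apply, mul_sub, Finset.sum_sub_distrib,
        Finset.mul_sum, apply_ite, Finset.sum_ite_eq, Finset.sum_ite_eq']
      by_cases h : i = j
      · subst h; field_simp
        simp
        all_goals ring
      · field_simp [h]
        simp [h, Ne.symm h]
    | inr u =>
      simp [Q0, M0, D0, Matrix.mul_apply, Fintype.sum_sum_type, Matrix.one_apply,
        Matrix.sub_apply, Matrix.smul_apply, transpose_apply, mul_sub, Finset.sum_sub_distrib,
        Finset.mul_sum, apply_ite, Finset.sum_ite_eq, Finset.sum_ite_eq']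
      field_simp
      all_goals ring
  | inr u => cases y with
    | inl j =>
      simp [Q0, M0, D0, Matrix.mul_apply, Fintype.sum_sum_type, Matrix.one_apply,
        Matrix.sub_apply, Matrix.smul_apply, transpose_apply, mul_sub, Finset.sum_sub_distrib,
        Finset.mul_sum, apply_ite, Finset.sum_ite_eq, Finset.sum_ite_eq']
      field_simp
      all_goals ring
    | inr v =>
      simp [Q0, M0, D0, Matrix.mul_apply, Fintype.sum_sum_type, Matrix.one_apply,
        Matrix.sub_apply, Matrix.smul_apply, transpose_apply, mul_sub, Finset.sum_sub_distrib,
        Finset.mul_sum, apply_ite, Finset.sum_ite_eq, Finset.sum_ite_eq']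
      field_simp
      all_goals ring

lemma detD0 (p : ℕ) {β : ℝ} (hβ : 0 < β) : (D0 p β).det ≠ 0 := by
  have hβ' : β ≠ 0 := hβ.ne'
  rw [D0, Matrix.det_fromBlocks_zero₂₁]
  have h1 : (Matrix.of fun (_ _ : Unit) => 1 / β).det = 1/β := Matrix.det_unique _
  rw [h1, Matrix.det_smul, Matrix.det_one]
  simp [hβ']

lemma detQ0 (p : ℕ) {β : ℝ} (hβ : 0 < β) : IsUnit (Q0 p β).det := by
  have h := congrArg Matrix.det (QtM p hβ)
  rw [Matrix.det_mul, Matrix.det_transpose] at h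
  have h2 : (Q0 p β).det * (M0 p β).det ≠ 0 := by rw [h]; exact detD0 p hβ
  exact isUnit_iff_ne_zero.mpr (left_ne_zero_of_mul h2)

/-- `𝒬` is invertible and `𝒬^{−T}𝒟 = ℳ`; equivalently, `𝒬ᵀℳ = 𝒟`. -/
theorem stmt3 {p m : ℕ} (hp : 1 ≤ p) (hm : 1 ≤ m) {β : ℝ} (hβ : 0 < β) :
    IsUnit (calQ p m β) ∧ (calQ p m β)ᵀ⁻¹ * calD p m β = calM p m β ∧
      (calQ p m β)ᵀ * calM p m β = calD p m β := by
  have hQdet : IsUnit (Q0 p β).det := detQ0 p hβ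
  have hcalQdet : IsUnit (calQ p m β).det := by
    rw [calQ, Matrix.det_kronecker, Matrix.det_one, one_pow, mul_one]
    simpa using hQdet.pow m
  have hT : (calQ p m β)ᵀ * calM p m β = calD p m β := by
    rw [calQ, calM, calD]
    rw [show (Q0 p β ⊗ₖ (1 : Matrix (Fin m) (Fin m) ℝ))ᵀ =
        (Q0 p β)ᵀ ⊗ₖ (1 : Matrix (Fin m) (Fin m) ℝ) by
      rw [← Matrix.kroneckerMap_transpose]; rw [Matrix.transpose_one]]
    rw [← Matrix.mul_kronecker_mul, QtM p hβ, Matrix.one_mul]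
  refine ⟨(Matrix.isUnit_iff_isUnit_det _).mpr hcalQdet, ?_, hT⟩
  have hTd : IsUnit ((calQ p m β)ᵀ).det := Matrix.isUnit_det_transpose _ hcalQdet
  rw [← hT, ← Matrix.mul_assoc, Matrix.nonsing_inv_mul _ hTd, Matrix.one_mul]
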